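/- Let θ_a > 0 for each arm a ∈ A with |A| = m, and suppose at time t the per-arm scores satisfy |S_a(t) − S_b(t)| ≤ 1 for all a, b in the active set A(t), and S_a(t) ≥ S_b(t) − 1 for a ∈ A(t), b ∉ A(t). Then for every a ∈ A(t), the arrival probability λ_a(t) = (S_a(t) + θ_a) / Σ_b (S_b(t) + θ_b) satisfies λ_a(t) ≥ c where c = min_{a,b ∈ A} θ_a / (m(1 + θ_b)). -/
import Mathlib


/-- Lemma 5 (balancedness of BE-AE, α = 1): if active arms' scores are within 1 of
each other and dominate inactive scores minus 1, then the arrival probability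
`λ_a(t) = (S a + θ a) / ∑_b (S b + θ b)` of every active arm `a` is at least
`c = min_{a,b} θ a / (m (1 + θ b))`. -/
theorem stmt_3 {ι : Type*} [Fintype ι] [Nonempty ι] [DecidableEq ι]
    (θ : ι → ℝ) (hθ : ∀ a, 0 < θ a)
    (Aactive : Finset ι) (S : ι → ℝ) (hS : ∀ a, 0 ≤ S a)
    (hbal : ∀ a ∈ Aactive, ∀ b ∈ Aactive, |S a - S b| ≤ 1)
    (hout : ∀ a ∈ Aactive, ∀ b ∉ Aactive, S b - 1 ≤ S a) :
    ∀ a ∈ Aactive,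
      (⨅ a' : ι, ⨅ b' : ι, θ a' / ((Fintype.card ι : ℝ) * (1 + θ b')))
        ≤ (S a + θ a) / ∑ b : ι, (S b + θ b) := by
  intro a ha
  obtain ⟨b', hb'⟩ := Finite.exists_max θ
  have hm : 0 < (Fintype.card ι : ℝ) := by
    exact_mod_cast Fintype.card_pos
  -- Step 1: the infimum is at most θ a / (m (1 + θ b'))
  have h1 : (⨅ a' : ι, ⨅ b' : ι, θ a' / ((Fintype.card ι : ℝ) * (1 + θ b')))
      ≤ θ a / ((Fintype.card ι : ℝ) * (1 + θ b')) := by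
    have hbdd : ∀ a' : ι, BddBelow (Set.range fun b'' : ι =>
        θ a' / ((Fintype.card ι : ℝ) * (1 + θ b''))) :=
      fun a' => (Set.finite_range _).bddBelow
    refine le_trans (ciInf_le ?_ a) (ciInf_le (hbdd a) b')
    exact (Set.finite_range _).bddBelow
  refine h1.trans ?_
  -- Step 2: every score is at most S a + 1
  have hSle : ∀ b : ι, S b ≤ S a + 1 := by
    intro b
    by_cases hb : b ∈ Aactive
    · have := hbal a ha b hb
      have := abs_le.mp this
      linarith [this.1]
    · linarith [hout a ha b hb]
  -- Step 3: sum bound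
  have hsum_le : ∑ b : ι, (S b + θ b) ≤ (Fintype.card ι : ℝ) * (S a + 1 + θ b') := by
    calc ∑ b : ι, (S b + θ b) ≤ ∑ _b : ι, (S a + 1 + θ b') := by
          apply Finset.sum_le_sum
          intro i _
          have := hSle i
          have := hb' i
          linarith
      _ = (Fintype.card ι : ℝ) * (S a + 1 + θ b') := by
          rw [Finset.sum_const, Finset.card_univ, nsmul_eq_mul]
  have hsum_pos : 0 < ∑ b : ι, (S b + θ b) := by
    apply Finset.sum_pos
    · intro i _
      have := hS i; have := hθ i; linarith
    · exact Finset.univ_nonempty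
  rw [div_le_div_iff₀ (mul_pos hm (by linarith [hθ b'])) hsum_pos]
  have hθa := hθ a
  have hθb' := hθ b'
  have hSa := hS a
  have hab : θ a ≤ θ b' := hb' a
  nlinarith [mul_le_mul_of_nonneg_left hsum_le hθa.le,
    mul_nonneg (mul_nonneg hm.le hSa) (sub_nonneg.2 (hab.trans (by linarith : θ b' ≤ 1 + θ b')))]
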